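/- For the finite truncation of the 1D alternating charge chain with n periodic image boxes on each side, the difference between the potentials at the two positive charges q₃ − q₁ (located at z = 5/8 and z = 1/8 in the original box) satisfies q₃ − q₁ = −1/(2n²) + O(1/n³) as n → ∞. -/

import Mathlib

open Filter

/-- Euclidean norm on `ℝ³` represented as `Fin 3 → ℝ`. -/
noncomputable def euclNorm (v : Fin 3 → ℝ) : ℝ := Real.sqrt (∑ i, v i ^ 2)

/-- The unit vector in the `z` direction. -/
def ez : Fin 3 → ℝ := ![0, 0, 1]

/-- Charges `(+1, -1, +1, -1)`. -/
def madCharge : Fin 4 → ℝ := ![1, -1, 1, -1]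

/-- Source positions `(1/2, 1/2, zₛ)` with `z`-coordinates `(1/8, 3/8, 5/8, 7/8)`. -/
noncomputable def madPos : Fin 4 → (Fin 3 → ℝ) :=
  fun s => ![1/2, 1/2, ![ (1:ℝ)/8, 3/8, 5/8, 7/8] s]

/-- Potential at charge `t` from the truncated chain of `2n+1` boxes, excluding the
self-term. -/
noncomputable def truncPotential (t : Fin 4) (n : ℕ) : ℝ :=
  ∑ m ∈ Finset.Icc (-(n : ℤ)) (n : ℤ), ∑ s : Fin 4,
    if s = t ∧ m = 0 then 0
    else madCharge s / euclNorm (madPos t - (madPos s + (m : ℝ) • ez))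

lemma norm_eval (a b : ℝ) (m : ℤ) :
    euclNorm (![1/2, 1/2, a] - (![1/2, 1/2, b] + (m : ℝ) • ez)) = |a - b - m| := by
  unfold euclNorm ez
  rw [Fin.sum_univ_three]
  simp only [Pi.sub_apply, Pi.add_apply, Pi.smul_apply, smul_eq_mul,
    Matrix.cons_val_zero, Matrix.cons_val_one, Matrix.head_cons, Matrix.cons_val_two,
    Matrix.tail_cons]
  rw [show ((1:ℝ)/2 - (1/2 + (m:ℝ)*0))^2 + (1/2 - (1/2 + (m:ℝ)*0))^2 + (a - (b + (m:ℝ)*1))^2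
      = (a - b - m)^2 by ring]
  exact Real.sqrt_sq_eq_abs _

noncomputable def zz : Fin 4 → ℝ := ![ (1:ℝ)/8, 3/8, 5/8, 7/8]

lemma term_eq (t s : Fin 4) (m : ℤ) :
    (if s = t ∧ m = 0 then 0
      else madCharge s / euclNorm (madPos t - (madPos s + (m : ℝ) • ez)))
      = madCharge s / |zz t - zz s - m| := by
  have h : madPos t - (madPos s + (m : ℝ) • ez)
      = ![1/2, 1/2, zz t] - (![1/2, 1/2, zz s] + (m : ℝ) • ez) := rfl
  rw [h, norm_eval]
  split_ifs with hc
  · obtain ⟨hs, hm⟩ := hc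
    subst hs hm
    simp
  · rfl

lemma pot_eq (t : Fin 4) (n : ℕ) :
    truncPotential t n = ∑ m ∈ Finset.Icc (-(n : ℤ)) (n : ℤ), ∑ s : Fin 4,
      madCharge s / |zz t - zz s - m| := by
  unfold truncPotential
  refine Finset.sum_congr rfl fun m _ => Finset.sum_congr rfl fun s _ => term_eq t s m

noncomputable def FF (m : ℤ) : ℝ := 1 / |(m : ℝ) - 1/4| - 1 / |(m : ℝ) - 1/2|

lemma inner_diff (m : ℤ) :
    (∑ s : Fin 4, madCharge s / |zz 2 - zz s - m|)
      - (∑ s : Fin 4, madCharge s / |zz 0 - zz s - m|) = FF (m + 1) - FF m := by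
  simp only [Fin.sum_univ_four, madCharge, zz, FF, Matrix.cons_val_zero, Matrix.cons_val_one,
    Matrix.head_cons, Matrix.cons_val_two, Matrix.tail_cons, Matrix.cons_val_three]
  push_cast
  simp only [← Real.sqrt_sq_eq_abs]
  ring_nf

lemma telescope (F : ℤ → ℝ) : ∀ n : ℕ,
    ∑ m ∈ Finset.Icc (-(n : ℤ)) (n : ℤ), (F (m + 1) - F m) = F ((n : ℤ) + 1) - F (-(n : ℤ)) := by
  intro n
  induction n with
  | zero => simp
  | succ k ih =>
    have hset : Finset.Icc (-((k:ℤ)+1)) ((k:ℤ)+1)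
        = insert (-((k:ℤ)+1)) (insert ((k:ℤ)+1) (Finset.Icc (-(k:ℤ)) (k:ℤ))) := by
      ext x; simp only [Finset.mem_Icc, Finset.mem_insert]; omega
    push_cast
    rw [hset, Finset.sum_insert (by simp only [Finset.mem_insert, Finset.mem_Icc]; omega),
      Finset.sum_insert (by simp only [Finset.mem_Icc]; omega), ih]
    push_cast
    ring_nf


/-- For the finite truncation with `n` image boxes on each side, the potentials at the two
positive charges satisfy `q₃ − q₁ = −1/(2n²) + O(1/n³)`. -/
theorem truncated_chain_dipole_asymmetry :
    ∃ C : ℝ, ∀ n : ℕ, 1 ≤ n →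
      |(truncPotential 2 n - truncPotential 0 n) - (-1 / (2 * (n : ℝ) ^ 2))| ≤
        C / (n : ℝ) ^ 3 := by
  refine ⟨1, fun n hn => ?_⟩
  have hx : (1 : ℝ) ≤ (n : ℝ) := by exact_mod_cast hn
  have hx0 : (0 : ℝ) < (n : ℝ) := by linarith
  have hdiff : truncPotential 2 n - truncPotential 0 n
      = 1 / ((n : ℝ) + 3/4) - 1 / ((n : ℝ) + 1/4) := by
    rw [pot_eq, pot_eq, ← Finset.sum_sub_distrib]
    rw [Finset.sum_congr rfl (fun m _ => inner_diff m), telescope FF n]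
    unfold FF
    push_cast
    rw [abs_of_pos (by linarith), abs_of_pos (by linarith),
      abs_of_neg (by linarith : -(n:ℝ) - 1/4 < 0), abs_of_neg (by linarith : -(n:ℝ) - 1/2 < 0)]
    ring_nf
  rw [hdiff]
  have hrw : 1 / ((n : ℝ) + 3/4) - 1 / ((n : ℝ) + 1/4) - (-1 / (2 * (n : ℝ) ^ 2))
      = ((n : ℝ) + 3/16) / (2 * (n : ℝ)^2 * (((n : ℝ) + 3/4) * ((n : ℝ) + 1/4))) := by
    field_simp
    ring
  rw [hrw, abs_of_nonneg (by positivity), div_le_div_iff₀ (by positivity) (by positivity)]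
  nlinarith [sq_nonneg ((n:ℝ)), pow_pos hx0 2, pow_pos hx0 3, pow_pos hx0 4]
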